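/- Let a, b, c, d be four points in ℝ³ (as purely imaginary quaternions) not lying on a common circle or line, with quaternionic cross-ratio cr(a,b,c,d) = [r, v]. If f is a purely imaginary quaternion with cr(a,b,c,f) = [λr, μv] for some reals λ, μ, and m is the center of the circumsphere of a,b,c,d, then f lies on that circumsphere, i.e., ‖f - m‖ equals the circumradius. -/

import Mathlib

open Quaternion

/-- Quaternionic cross-ratio. -/
noncomputable def crH (a b c d : ℍ[ℝ]) : ℍ[ℝ] := (a - b) * (b - c)⁻¹ * (c - d) * (d - a)⁻¹

private lemma imSq (z : ℍ[ℝ]) (hz : z.re = 0) :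
    z ^ 2 = -((normSq z : ℝ) : ℍ[ℝ]) := by
  have h : star z = -z := Quaternion.star_eq_neg.2 hz
  have h2 : z * z = -(z * star z) := by rw [h, mul_neg, neg_neg]
  rw [sq, h2, Quaternion.self_mul_star]

private lemma sphere_iff {x m : ℍ[ℝ]} {R : ℝ} (hR : 0 < R) (hx : x.re = 0) (hm : m.re = 0) :
    ‖x - m‖ = R ↔ (x - m) ^ 2 = -((R ^ 2 : ℝ) : ℍ[ℝ]) := by
  have hre : (x - m).re = 0 := by simp [Quaternion.re_sub, hx, hm]
  rw [imSq _ hre]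
  constructor
  · intro h
    have : (normSq (x - m) : ℝ) = R ^ 2 := by
      rw [Quaternion.normSq_eq_norm_mul_self, h]; ring
    rw [this]
  · intro h
    have h1 : ((normSq (x - m) : ℝ) : ℍ[ℝ]) = ((R ^ 2 : ℝ) : ℍ[ℝ]) :=
      neg_injective h
    have h2 : (normSq (x - m) : ℝ) = R ^ 2 := Quaternion.coe_injective h1
    rw [Quaternion.normSq_eq_norm_mul_self] at h2
    nlinarith [norm_nonneg (x - m)]

theorem stmt13 (a b c d f m : ℍ[ℝ]) (R : ℝ) (hR : 0 < R)
    (ha : a.re = 0) (hb : b.re = 0) (hc : c.re = 0) (hd : d.re = 0)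
    (hf : f.re = 0) (hm : m.re = 0)
    (hab : a ≠ b) (hac : a ≠ c) (had : a ≠ d) (hbc : b ≠ c) (hbd : b ≠ d) (hcd : c ≠ d)
    (haff : ∀ α β γ δ : ℝ, α • a + β • b + γ • c + δ • d = 0 →
      α + β + γ + δ = 0 → α = 0 ∧ β = 0 ∧ γ = 0 ∧ δ = 0)
    (hncyc : (crH a b c d).im ≠ 0)
    (lam mu : ℝ)
    (hcrf : (crH a b c f).re = lam * (crH a b c d).re ∧
      (crH a b c f).im = mu • (crH a b c d).im)
    (hma : ‖a - m‖ = R) (hmb : ‖b - m‖ = R) (hmc : ‖c - m‖ = R) (hmd : ‖d - m‖ = R) :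
    ‖f - m‖ = R := by
  by_cases hfa : f = a
  · rw [hfa]; exact hma
  have hba : b - a ≠ 0 := sub_ne_zero.2 hab.symm
  have hca : c - a ≠ 0 := sub_ne_zero.2 hac.symm
  have hda : d - a ≠ 0 := sub_ne_zero.2 had.symm
  have hfa' : f - a ≠ 0 := sub_ne_zero.2 hfa
  have hbc' : b - c ≠ 0 := sub_ne_zero.2 hbc
  -- the key factorization of the cross-ratio through inversion at `a`
  have key : ∀ x : ℍ[ℝ], x - a ≠ 0 →
      crH a b c x = (a - b) * (b - c)⁻¹ * (a - c) * ((c - a)⁻¹ - (x - a)⁻¹) := by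
    intro x hx
    have e1 : (a - c) * (c - a)⁻¹ = -1 := by
      rw [show a - c = -(c - a) by abel, neg_mul, mul_inv_cancel₀ hca]
    have h1 : (a - c) * ((c - a)⁻¹ - (x - a)⁻¹) * (x - a) = c - x := by
      rw [mul_sub (a - c) ((c - a)⁻¹) ((x - a)⁻¹),
        sub_mul ((a - c) * (c - a)⁻¹) ((a - c) * (x - a)⁻¹) (x - a), e1,
        mul_assoc (a - c) ((x - a)⁻¹) (x - a), inv_mul_cancel₀ hx, mul_one]
      noncomm_ring
    have h2 : (c - x) * (x - a)⁻¹ = (a - c) * ((c - a)⁻¹ - (x - a)⁻¹) := by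
      rw [← h1, mul_assoc, mul_inv_cancel₀ hx, mul_one]
    show (a - b) * (b - c)⁻¹ * (c - x) * (x - a)⁻¹ = _
    rw [mul_assoc ((a - b) * (b - c)⁻¹), h2, ← mul_assoc]
  set K : ℍ[ℝ] := (a - b) * (b - c)⁻¹ * (a - c) with hKdef
  -- `crH a b c b = 1`, hence `K⁻¹ = (c-a)⁻¹ - (b-a)⁻¹`
  have hKu : K * ((c - a)⁻¹ - (b - a)⁻¹) = 1 := by
    rw [← key b hba]
    show (a - b) * (b - c)⁻¹ * (c - b) * (b - a)⁻¹ = 1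
    have hab' : a - b ≠ 0 := sub_ne_zero.2 hab
    rw [show c - b = -(b - c) by abel, mul_assoc (a - b) ((b - c)⁻¹) (-(b - c)), mul_neg,
      inv_mul_cancel₀ hbc', mul_neg_one, show b - a = -(a - b) by abel, inv_neg,
      neg_mul_neg, mul_inv_cancel₀ hab']
  have hK0 : K ≠ 0 := by
    intro h
    rw [h, zero_mul] at hKu
    exact zero_ne_one hKu
  have hKinv : K⁻¹ = (c - a)⁻¹ - (b - a)⁻¹ := inv_eq_of_mul_eq_one_right hKu
  have hcrd : crH a b c d = K * ((c - a)⁻¹ - (d - a)⁻¹) := key d hda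
  have hcrfK : crH a b c f = K * ((c - a)⁻¹ - (f - a)⁻¹) := key f hfa'
  set r0 : ℝ := (crH a b c d).re with hr0
  -- express crH a b c f as a combination
  have hcrf_eq : crH a b c f =
      ((lam * r0 - mu * r0 : ℝ) : ℍ[ℝ]) + mu • crH a b c d := by
    have him : (crH a b c d).im = crH a b c d - ((r0 : ℝ) : ℍ[ℝ]) :=
      eq_sub_of_add_eq' (Quaternion.re_add_im _)
    conv_lhs => rw [← Quaternion.re_add_im (crH a b c f)]
    rw [hcrf.1, hcrf.2, him, smul_sub, Quaternion.smul_coe]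
    push_cast
    module
  -- hence (f-a)⁻¹ is an affine combination
  set s : ℝ := lam * r0 - mu * r0 with hs
  have hqv : (c - a)⁻¹ - (f - a)⁻¹ =
      s • ((c - a)⁻¹ - (b - a)⁻¹) + mu • ((c - a)⁻¹ - (d - a)⁻¹) := by
    have h1 : K⁻¹ * crH a b c f = (c - a)⁻¹ - (f - a)⁻¹ := by
      rw [hcrfK, ← mul_assoc, inv_mul_cancel₀ hK0, one_mul]
    have h2 : K⁻¹ * crH a b c d = (c - a)⁻¹ - (d - a)⁻¹ := by
      rw [hcrd, ← mul_assoc, inv_mul_cancel₀ hK0, one_mul]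
    rw [← h1, hcrf_eq, mul_add, Quaternion.mul_coe_eq_smul, mul_smul_comm, h2, hKinv]
  have hqexpr : (f - a)⁻¹ = (c - a)⁻¹
      - (s • ((c - a)⁻¹ - (b - a)⁻¹) + mu • ((c - a)⁻¹ - (d - a)⁻¹)) := by
    rw [← hqv]; abel
  -- points on the sphere invert to a plane
  have plane : ∀ x : ℍ[ℝ], x.re = 0 → x - a ≠ 0 → ‖x - m‖ = R →
      (x - a)⁻¹ * (m - a) + (m - a) * (x - a)⁻¹ = 1 := by
    intro x hx hxa hxm
    have h1 : (x - m) ^ 2 = -((R ^ 2 : ℝ) : ℍ[ℝ]) := (sphere_iff hR hx hm).1 hxm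
    have h2 : (a - m) ^ 2 = -((R ^ 2 : ℝ) : ℍ[ℝ]) := (sphere_iff hR ha hm).1 hma
    have h3 : (x - a) * (x - a) = (x - a) * (m - a) + (m - a) * (x - a) := by
      have e : (x - m) ^ 2 - (a - m) ^ 2
          = (x - a) * (x - a) - ((x - a) * (m - a) + (m - a) * (x - a)) := by
        noncomm_ring
      rw [h1, h2, sub_self] at e
      have := e.symm
      rwa [sub_eq_zero] at this
    have key2 : (x - a)⁻¹ * ((x - a) * (x - a)) * (x - a)⁻¹
        = (x - a)⁻¹ * ((x - a) * (m - a) + (m - a) * (x - a)) * (x - a)⁻¹ := by rw [h3]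
    simp only [mul_add, add_mul, mul_assoc, inv_mul_cancel_left₀ hxa,
      mul_inv_cancel₀ hxa, inv_mul_cancel₀ hxa, mul_one, one_mul] at key2
    rw [add_comm]
    exact key2.symm
  have hPu : (b - a)⁻¹ * (m - a) + (m - a) * (b - a)⁻¹ = 1 := plane b hb hba hmb
  have hPv : (c - a)⁻¹ * (m - a) + (m - a) * (c - a)⁻¹ = 1 := plane c hc hca hmc
  have hPd : (d - a)⁻¹ * (m - a) + (m - a) * (d - a)⁻¹ = 1 := plane d hd hda hmd
  -- linearity of the plane form
  have Padd : ∀ z w : ℍ[ℝ], (z + w) * (m - a) + (m - a) * (z + w)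
      = (z * (m - a) + (m - a) * z) + (w * (m - a) + (m - a) * w) := by
    intro z w; noncomm_ring
  have Psub : ∀ z w : ℍ[ℝ], (z - w) * (m - a) + (m - a) * (z - w)
      = (z * (m - a) + (m - a) * z) - (w * (m - a) + (m - a) * w) := by
    intro z w; noncomm_ring
  have Psmul : ∀ (r : ℝ) (z : ℍ[ℝ]), (r • z) * (m - a) + (m - a) * (r • z)
      = r • (z * (m - a) + (m - a) * z) := by
    intro r z; rw [smul_mul_assoc, mul_smul_comm, smul_add]
  have hPf : (f - a)⁻¹ * (m - a) + (m - a) * (f - a)⁻¹ = 1 := by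
    rw [hqexpr]
    rw [Psub ((c - a)⁻¹) (s • ((c - a)⁻¹ - (b - a)⁻¹) + mu • ((c - a)⁻¹ - (d - a)⁻¹))]
    rw [Padd (s • ((c - a)⁻¹ - (b - a)⁻¹)) (mu • ((c - a)⁻¹ - (d - a)⁻¹))]
    rw [Psmul s ((c - a)⁻¹ - (b - a)⁻¹), Psmul mu ((c - a)⁻¹ - (d - a)⁻¹)]
    rw [Psub ((c - a)⁻¹) ((b - a)⁻¹), Psub ((c - a)⁻¹) ((d - a)⁻¹)]
    rw [hPu, hPv, hPd]
    simp
  -- back to the sphere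
  have e := congrArg (fun z => (f - a) * z * (f - a)) hPf
  simp only [mul_add, add_mul, mul_assoc, mul_inv_cancel_left₀ hfa',
    inv_mul_cancel₀ hfa', mul_inv_cancel₀ hfa', mul_one, one_mul] at e
  -- e : (m - a) * (f - a) + (f - a) * (m - a) = (f - a) * (f - a)
  have h2 : (a - m) ^ 2 = -((R ^ 2 : ℝ) : ℍ[ℝ]) := (sphere_iff hR ha hm).1 hma
  have hfsq : (f - m) ^ 2 = -((R ^ 2 : ℝ) : ℍ[ℝ]) := by
    have hid : (f - m) ^ 2 = (f - a) * (f - a)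
        - ((m - a) * (f - a) + (f - a) * (m - a)) + (a - m) ^ 2 := by noncomm_ring
    rw [hid, ← e, sub_self, zero_add, h2]
  exact (sphere_iff hR hf hm).2 hfsq
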